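/- arXiv:2212.12863 — 2 statements merged into one kernel-verified Lean document; each statement's English description precedes it below -/
import Mathlib

section
/- Let k be a commutative ring, A a commutative Hopf algebra over k, and suppose the trivial subcomodule k ⊆ A has a subcomodule complement P for the left-regular coaction (A = k ⊕ P as comodules with respect to left translation, and P is also stable under right translation). Define I : A → k to be the projection along P, so I(1)=1 and I is a comodule map for both the left and right coactions. Then for every A-comodule V, the map R_V := (id_V ⊗ I) ∘ Δ_V : V → V satisfies: (i) R_V(v) = v for all v ∈ V^G; (ii) the image of R_V lies in V^G; (iii) R_V is natural in V. -/
open TensorProduct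

/-- A comodule structure on a `k`-module `M` over a `k`-coalgebra `A`: a coaction map
`ρ : M → M ⊗[k] A` which is coassociative and counital. -/
structure Comod (k A M : Type*) [CommRing k]
    [AddCommGroup A] [Module k A] [Coalgebra k A]
    [AddCommGroup M] [Module k M] where
  ρ : M →ₗ[k] M ⊗[k] A
  coassoc : ∀ m : M,
    (TensorProduct.assoc k M A A) (LinearMap.rTensor A ρ (ρ m)) =
      LinearMap.lTensor M (Coalgebra.comul (R := k)) (ρ m)
  counit : ∀ m : M,
    (TensorProduct.rid k M) (LinearMap.lTensor M (Coalgebra.counit (R := k)) (ρ m)) = m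

variable {k A M N : Type*} [CommRing k]
  [AddCommGroup A] [Module k A] [Coalgebra k A]
  [AddCommGroup M] [Module k M] [AddCommGroup N] [Module k N]

/-- The invariants `M^G` of a comodule: elements `m` with `ρ m = m ⊗ 1`.  (For a Hopf algebra
`A`, `1` is the unit of `A`; this is the kernel of `Δ_M - id ⊗ 1`.) -/
def Comod.invariants [One A] (c : Comod k A M) : Submodule k M where
  carrier := {m | c.ρ m = m ⊗ₜ[k] (1 : A)}
  add_mem' := by
    intro a b ha hb
    simp only [Set.mem_setOf_eq, map_add] at *
    rw [ha, hb, TensorProduct.add_tmul]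
  zero_mem' := by simp
  smul_mem' := by
    intro r m hm
    simp only [Set.mem_setOf_eq, map_smul] at *
    rw [hm, TensorProduct.smul_tmul']

/-- A `k`-linear map between comodules is a comodule homomorphism if it intertwines the
coactions. -/
def IsComodHom (cM : Comod k A M) (cN : Comod k A N) (f : M →ₗ[k] N) : Prop :=
  ∀ m : M, LinearMap.rTensor A f (cM.ρ m) = cN.ρ (f m)

/-- Let `k` be a commutative ring, `A` a commutative Hopf algebra over `k`, and suppose
`I : A → k` is `k`-linear with `I 1 = 1` which is bi-invariant: `(id ⊗ I) ∘ Δ_A = unit ∘ I`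
and `(I ⊗ id) ∘ Δ_A = unit ∘ I` (as happens for the projection along a bi-stable comodule
complement `P` of `k ⊆ A`).  Then for every `A`-comodule `V`, the Reynolds operator
`R_V := (id_V ⊗ I) ∘ Δ_V : V → V` satisfies: (i) `R_V v = v` for all `v ∈ V^G`; (ii) the image
of `R_V` lies in `V^G`; (iii) `R_V` is natural in `V`. -/
theorem stmt_16 (k A : Type*) [CommRing k] [CommRing A] [HopfAlgebra k A]
    (I : A →ₗ[k] k) (hI1 : I 1 = 1)
    (hleft : ∀ a : A,
      (TensorProduct.rid k A) (LinearMap.lTensor A I (Coalgebra.comul (R := k) a)) =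
        algebraMap k A (I a))
    (hright : ∀ a : A,
      (TensorProduct.lid k A) (LinearMap.rTensor A I (Coalgebra.comul (R := k) a)) =
        algebraMap k A (I a))
    (V : Type*) [AddCommGroup V] [Module k V] (c : Comod k A V) :
    (∀ v ∈ c.invariants,
        (TensorProduct.rid k V) (LinearMap.lTensor V I (c.ρ v)) = v) ∧
    (∀ v : V,
        (TensorProduct.rid k V) (LinearMap.lTensor V I (c.ρ v)) ∈ c.invariants) ∧
    (∀ (W : Type*) [AddCommGroup W] [Module k W] (cW : Comod k A W) (φ : V →ₗ[k] W),
        IsComodHom c cW φ →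
        ∀ v : V, (TensorProduct.rid k W) (LinearMap.lTensor W I (cW.ρ (φ v))) =
          φ ((TensorProduct.rid k V) (LinearMap.lTensor V I (c.ρ v)))) := by
  refine ⟨?_, ?_, ?_⟩
  · intro v hv
    have hv' : c.ρ v = v ⊗ₜ[k] (1 : A) := hv
    rw [hv']
    simp [hI1]
  · intro v
    show c.ρ _ = _ ⊗ₜ[k] (1 : A)
    set G' : A ⊗[k] A →ₗ[k] A :=
      (TensorProduct.rid k A).toLinearMap ∘ₗ LinearMap.lTensor A I with hG'
    have key1 : ∀ x : V ⊗[k] A,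
        (TensorProduct.rid k (V ⊗[k] A))
          (LinearMap.lTensor (V ⊗[k] A) I (LinearMap.rTensor A c.ρ x)) =
        c.ρ ((TensorProduct.rid k V) (LinearMap.lTensor V I x)) := by
      intro x
      induction x using TensorProduct.induction_on with
      | zero => simp
      | tmul v a => simp [TensorProduct.smul_tmul']
      | add x y hx hy => simp [hx, hy]
    have key2 : ∀ y : (V ⊗[k] A) ⊗[k] A,
        LinearMap.lTensor V G' ((TensorProduct.assoc k V A A) y) =
        (TensorProduct.rid k (V ⊗[k] A)) (LinearMap.lTensor (V ⊗[k] A) I y) := by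
      intro y
      induction y using TensorProduct.induction_on with
      | zero => simp
      | tmul x b =>
        induction x using TensorProduct.induction_on with
        | zero => simp
        | tmul v a => simp [hG', TensorProduct.smul_tmul']
        | add x1 x2 h1 h2 =>
          simp only [TensorProduct.add_tmul, map_add] at *
          rw [h1, h2]
      | add x y hx hy => simp [hx, hy]
    have key3 : ∀ x : V ⊗[k] A,
        LinearMap.lTensor V G'
          (LinearMap.lTensor V (Coalgebra.comul (R := k)) x) =
        ((TensorProduct.rid k V) (LinearMap.lTensor V I x)) ⊗ₜ[k] (1 : A) := by
      intro x
      induction x using TensorProduct.induction_on with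
      | zero => simp
      | tmul v a =>
        simp only [LinearMap.lTensor_tmul, TensorProduct.rid_tmul, hG',
          LinearMap.coe_comp, LinearEquiv.coe_coe, Function.comp_apply]
        rw [hleft a, Algebra.algebraMap_eq_smul_one, TensorProduct.tmul_smul,
          TensorProduct.smul_tmul']
      | add x y hx hy => simp [hx, hy, TensorProduct.add_tmul]
    calc c.ρ ((TensorProduct.rid k V) (LinearMap.lTensor V I (c.ρ v)))
        = (TensorProduct.rid k (V ⊗[k] A))
            (LinearMap.lTensor (V ⊗[k] A) I (LinearMap.rTensor A c.ρ (c.ρ v))) :=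
          (key1 (c.ρ v)).symm
      _ = LinearMap.lTensor V G'
            ((TensorProduct.assoc k V A A) (LinearMap.rTensor A c.ρ (c.ρ v))) :=
          (key2 _).symm
      _ = LinearMap.lTensor V G'
            (LinearMap.lTensor V (Coalgebra.comul (R := k)) (c.ρ v)) := by
          rw [c.coassoc v]
      _ = _ := key3 (c.ρ v)
  · intro W _ _ cW φ hφ v
    rw [← hφ v]
    generalize c.ρ v = x
    induction x using TensorProduct.induction_on with
    | zero => simp
    | tmul v a => simp [TensorProduct.smul_tmul']
    | add x y hx hy => simp [hx, hy]
end

section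
/- Let k → A be a faithfully flat extension of commutative rings and H a flat commutative Hopf algebra over k. If for every surjection of H ⊗_k A-comodules the invariants map is surjective (i.e., the base-changed group is linearly reductive over A), then for every surjection of H-comodules V → W the map V^G → W^G is surjective (G is linearly reductive over k). -/
open TensorProduct

variable {k A M N : Type*} [CommRing k]
  [AddCommGroup A] [Module k A] [Coalgebra k A]
  [AddCommGroup M] [Module k M] [AddCommGroup N] [Module k N]

/-- A comodule over the base-changed Hopf algebra `H ⊗[k] A`, encoded via the canonical
identification `M ⊗[A] (H ⊗[k] A) ≅ M ⊗[k] H`: an `A`-module `M` together with an `A`-linear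
coaction `ρ : M → M ⊗[k] H` which is coassociative and counital for the coalgebra structure
of `H` over `k`. -/
structure ComodOver (k H A M : Type*) [CommRing k]
    [AddCommGroup H] [Module k H] [Coalgebra k H]
    [CommRing A] [Algebra k A]
    [AddCommGroup M] [Module k M] [Module A M] [IsScalarTower k A M]
    [SMulCommClass k A M] where
  ρ : M →ₗ[A] M ⊗[k] H
  coassoc : ∀ m : M,
    (TensorProduct.assoc k M H H)
        (LinearMap.rTensor H (ρ.restrictScalars k) (ρ m)) =
      LinearMap.lTensor M (Coalgebra.comul (R := k)) (ρ m)
  counit : ∀ m : M,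
    (TensorProduct.rid k M) (LinearMap.lTensor M (Coalgebra.counit (R := k)) (ρ m)) = m

variable {k H A M N : Type*} [CommRing k]
  [AddCommGroup H] [Module k H] [Coalgebra k H] [CommRing A] [Algebra k A]

/-- The invariants `M^{G_A}` of a comodule over `H ⊗[k] A`: elements with `ρ m = m ⊗ 1`. -/
def ComodOver.invariants [One H]
    [AddCommGroup M] [Module k M] [Module A M] [IsScalarTower k A M] [SMulCommClass k A M]
    (c : ComodOver k H A M) : Submodule A M where
  carrier := {m | c.ρ m = m ⊗ₜ[k] (1 : H)}
  add_mem' := by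
    intro a b ha hb
    simp only [Set.mem_setOf_eq, map_add] at *
    rw [ha, hb, TensorProduct.add_tmul]
  zero_mem' := by simp
  smul_mem' := by
    intro r m hm
    simp only [Set.mem_setOf_eq, map_smul] at *
    rw [hm, TensorProduct.smul_tmul']

/-- An `A`-linear map between comodules over `H ⊗[k] A` is a comodule homomorphism if it
intertwines the coactions. -/
def IsComodOverHom
    [AddCommGroup M] [Module k M] [Module A M] [IsScalarTower k A M] [SMulCommClass k A M]
    [AddCommGroup N] [Module k N] [Module A N] [IsScalarTower k A N] [SMulCommClass k A N]
    (cM : ComodOver k H A M) (cN : ComodOver k H A N) (f : M →ₗ[A] N) : Prop :=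
  ∀ m : M, LinearMap.rTensor H (f.restrictScalars k) (cM.ρ m) = cN.ρ (f m)

namespace Aux17

open TensorProduct LinearMap

section

variable (k H A V W : Type*) [CommRing k] [CommRing H] [HopfAlgebra k H]
  [CommRing A] [Algebra k A]
  [AddCommGroup V] [Module k V] [AddCommGroup W] [Module k W]

/-- The `A`-linear identification `A ⊗ (V ⊗ H) ≃ (A ⊗ V) ⊗ H`. -/
noncomputable def e : A ⊗[k] (V ⊗[k] H) ≃ₗ[A] (A ⊗[k] V) ⊗[k] H :=
  (AlgebraTensorModule.assoc k k A A V H).symm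

@[simp] lemma e_tmul (a : A) (v : V) (h : H) :
    e k H A V (a ⊗ₜ (v ⊗ₜ h)) = (a ⊗ₜ v) ⊗ₜ h := rfl

variable {k H V W A}

lemma aux1 (a : A) (y : V ⊗[k] H) (h : H) :
    (TensorProduct.assoc k (A ⊗[k] V) H H) ((e k H A V (a ⊗ₜ y)) ⊗ₜ h)
      = rTensor (H ⊗[k] H) ((TensorProduct.mk k A V) a)
          ((TensorProduct.assoc k V H H) (y ⊗ₜ h)) := by
  induction y using TensorProduct.induction_on with
  | zero => simp
  | tmul v' h' => simp
  | add x y hx hy => simp only [map_add, add_tmul, tmul_add] at *; rw [hx, hy]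

lemma key2 (a : A) (x : V ⊗[k] H) :
    lTensor (A ⊗[k] V) (Coalgebra.comul (R := k)) (e k H A V (a ⊗ₜ x))
      = rTensor (H ⊗[k] H) ((TensorProduct.mk k A V) a)
          (lTensor V (Coalgebra.comul (R := k)) x) := by
  induction x using TensorProduct.induction_on with
  | zero => simp
  | tmul v' h => simp
  | add x y hx hy => simp only [map_add, tmul_add] at *; rw [hx, hy]

lemma key3 (a : A) (x : V ⊗[k] H) :
    (TensorProduct.rid k (A ⊗[k] V))
        (lTensor (A ⊗[k] V) (Coalgebra.counit (R := k)) (e k H A V (a ⊗ₜ x)))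
      = (TensorProduct.mk k A V a)
          ((TensorProduct.rid k V) (lTensor V (Coalgebra.counit (R := k)) x)) := by
  induction x using TensorProduct.induction_on with
  | zero => simp
  | tmul v' h => simp [tmul_smul]
  | add x y hx hy => simp only [map_add, tmul_add] at *; rw [hx, hy]

/-- Base change of an `H`-comodule to an `H ⊗ A`-comodule. -/
noncomputable def bc (cV : Comod k H V) : ComodOver k H A (A ⊗[k] V) where
  ρ := (e k H A V).toLinearMap ∘ₗ cV.ρ.baseChange A
  coassoc := by
    intro m
    induction m using TensorProduct.induction_on with
    | zero => simp
    | add x y hx hy => simp only [map_add] at *; rw [hx, hy]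
    | tmul a v =>
      have hρ : ((e k H A V).toLinearMap ∘ₗ cV.ρ.baseChange A) (a ⊗ₜ v)
          = e k H A V (a ⊗ₜ cV.ρ v) := by simp
      have key1 : ∀ x : V ⊗[k] H,
          (TensorProduct.assoc k (A ⊗[k] V) H H)
            (rTensor H (((e k H A V).toLinearMap ∘ₗ cV.ρ.baseChange A).restrictScalars k)
              (e k H A V (a ⊗ₜ x)))
          = rTensor (H ⊗[k] H) ((TensorProduct.mk k A V) a)
              ((TensorProduct.assoc k V H H) (rTensor H cV.ρ x)) := by
        intro x
        induction x using TensorProduct.induction_on with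
        | zero => simp
        | tmul v' h =>
          have : rTensor H (((e k H A V).toLinearMap ∘ₗ cV.ρ.baseChange A).restrictScalars k)
              (e k H A V (a ⊗ₜ (v' ⊗ₜ h))) = (e k H A V (a ⊗ₜ cV.ρ v')) ⊗ₜ h := by
            simp
          rw [this, aux1 a (cV.ρ v') h]
          simp
        | add x y hx hy => simp only [map_add, tmul_add] at *; rw [hx, hy]
      rw [hρ, key1 (cV.ρ v), cV.coassoc v, ← key2 a (cV.ρ v)]
  counit := by
    intro m
    induction m using TensorProduct.induction_on with
    | zero => simp
    | add x y hx hy => simp only [map_add] at *; rw [hx, hy]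
    | tmul a v =>
      have hρ : ((e k H A V).toLinearMap ∘ₗ cV.ρ.baseChange A) (a ⊗ₜ v)
          = e k H A V (a ⊗ₜ cV.ρ v) := by simp
      rw [hρ, key3 a (cV.ρ v), cV.counit v]
      rfl

lemma bc_ρ_tmul (cV : Comod k H V) (a : A) (v : V) :
    (bc (A := A) cV).ρ (a ⊗ₜ v) = e k H A V (a ⊗ₜ cV.ρ v) := by
  simp [bc]

lemma bc_hom (cV : Comod k H V) (cW : Comod k H W) (φ : V →ₗ[k] W)
    (hφhom : IsComodHom cV cW φ) :
    IsComodOverHom (bc (A := A) cV) (bc (A := A) cW) (φ.baseChange A) := by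
  intro m
  induction m using TensorProduct.induction_on with
  | zero => simp
  | add x y hx hy => simp only [map_add] at *; rw [hx, hy]
  | tmul a v =>
    rw [bc_ρ_tmul]
    have key4 : ∀ x : V ⊗[k] H,
        rTensor H ((φ.baseChange A).restrictScalars k) (e k H A V (a ⊗ₜ x))
          = e k H A W (a ⊗ₜ rTensor H φ x) := by
      intro x
      induction x using TensorProduct.induction_on with
      | zero => simp
      | tmul v' h => simp
      | add x y hx hy => simp only [map_add, tmul_add] at *; rw [hx, hy]
    rw [key4 (cV.ρ v), hφhom v]
    have : (φ.baseChange A) (a ⊗ₜ v) = a ⊗ₜ φ v := by simp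
    rw [this, bc_ρ_tmul]

variable (k H V) in
/-- `v ↦ v ⊗ 1`. -/
noncomputable def iot : V →ₗ[k] V ⊗[k] H := (TensorProduct.mk k V H).flip 1

@[simp] lemma iot_apply (v : V) : iot k H V v = v ⊗ₜ (1 : H) := rfl

/-- The "defect" map whose kernel is the invariants. -/
noncomputable def Dmap (cV : Comod k H V) : V →ₗ[k] V ⊗[k] H := cV.ρ - iot k H V

lemma mem_invariants_iff (cV : Comod k H V) (v : V) :
    v ∈ cV.invariants ↔ Dmap cV v = 0 := by
  show cV.ρ v = v ⊗ₜ (1 : H) ↔ _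
  rw [Dmap, LinearMap.sub_apply, sub_eq_zero, iot_apply]

lemma e_lTensor_iot (x : A ⊗[k] V) :
    e k H A V (lTensor A (iot k H V) x) = x ⊗ₜ (1 : H) := by
  induction x using TensorProduct.induction_on with
  | zero => simp
  | tmul a v => simp
  | add x y hx hy => simp only [map_add, add_tmul] at *; rw [hx, hy]

lemma mem_bc_invariants_iff (cV : Comod k H V) (x : A ⊗[k] V) :
    x ∈ (bc (A := A) cV).invariants ↔ lTensor A (Dmap cV) x = 0 := by
  have h1 : (bc (A := A) cV).ρ x = e k H A V (lTensor A cV.ρ x) := by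
    show (e k H A V) (cV.ρ.baseChange A x) = _
    rw [LinearMap.baseChange_eq_ltensor]
  show (bc (A := A) cV).ρ x = x ⊗ₜ (1 : H) ↔ _
  rw [h1, ← e_lTensor_iot x, (e k H A V).injective.eq_iff,
    show lTensor A (Dmap cV) = lTensor A cV.ρ - lTensor A (iot k H V) by
      rw [Dmap, LinearMap.lTensor_sub],
    LinearMap.sub_apply, sub_eq_zero]

end

end Aux17

universe u

/-- Let `k → A` be a faithfully flat extension of commutative rings and `H` a flat commutative
Hopf algebra over `k`.  If every surjection of `H ⊗[k] A`-comodules is surjective on invariants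
(the base-changed group is linearly reductive over `A`), then every surjection of `H`-comodules
`V → W` is surjective on invariants (`G` is linearly reductive over `k`). -/
theorem stmt_17 (k H A : Type u) [CommRing k] [CommRing H] [HopfAlgebra k H] [Module.Flat k H]
    [CommRing A] [Algebra k A] [Module.FaithfullyFlat k A]
    (hLRA : ∀ (M N : Type u) [AddCommGroup M] [Module k M] [Module A M]
      [IsScalarTower k A M] [SMulCommClass k A M]
      [AddCommGroup N] [Module k N] [Module A N] [IsScalarTower k A N] [SMulCommClass k A N]
      (cM : ComodOver k H A M) (cN : ComodOver k H A N) (f : M →ₗ[A] N),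
      IsComodOverHom cM cN f → Function.Surjective f →
      ∀ n ∈ cN.invariants, ∃ m ∈ cM.invariants, f m = n)
    (V W : Type u) [AddCommGroup V] [Module k V] [AddCommGroup W] [Module k W]
    (cV : Comod k H V) (cW : Comod k H W)
    (φ : V →ₗ[k] W) (hφhom : IsComodHom cV cW φ) (hφ : Function.Surjective φ) :
    ∀ w ∈ cW.invariants, ∃ v ∈ cV.invariants, φ v = w := by
  classical
  intro w hw
  set DV := Aux17.Dmap cV with hDV
  set DW := Aux17.Dmap cW with hDW
  have hmap : ∀ v ∈ LinearMap.ker DV, φ v ∈ LinearMap.ker DW := by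
    intro v hv
    rw [LinearMap.mem_ker] at *
    have h1 : DW (φ v) = LinearMap.rTensor H φ (DV v) := by
      simp only [hDV, hDW, Aux17.Dmap, LinearMap.sub_apply, map_sub, Aux17.iot_apply,
        LinearMap.rTensor_tmul, hφhom v]
    rw [h1, hv, map_zero]
  set φG : LinearMap.ker DV →ₗ[k] LinearMap.ker DW := φ.restrict hmap with hφG
  -- flat base change of invariants
  have hexactV := Module.Flat.lTensor_exact A (LinearMap.exact_subtype_ker_map DV)
  have hinj : Function.Injective (LinearMap.lTensor A (LinearMap.ker DW).subtype) :=
    Module.Flat.lTensor_preserves_injective_linearMap _ (Submodule.injective_subtype _)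
  have hsurjbc : Function.Surjective (φ.baseChange A) := by
    have hs : Function.Surjective (LinearMap.lTensor A φ) := LinearMap.lTensor_surjective A hφ
    intro z
    obtain ⟨x, hx⟩ := hs z
    exact ⟨x, by rw [LinearMap.baseChange_eq_ltensor]; exact hx⟩
  have hsurj : Function.Surjective (LinearMap.lTensor A φG) := by
    intro y
    set ybar := LinearMap.lTensor A (LinearMap.ker DW).subtype y with hybar
    have hy0 : LinearMap.lTensor A DW ybar = 0 := by
      rw [hybar, ← LinearMap.comp_apply, ← LinearMap.lTensor_comp]
      have hz : DW.comp (LinearMap.ker DW).subtype = 0 := by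
        ext x
        exact x.2
      rw [hz]
      simp
    have hyinv : ybar ∈ (Aux17.bc (A := A) cW).invariants :=
      (Aux17.mem_bc_invariants_iff cW ybar).2 hy0
    obtain ⟨x, hxinv, hx⟩ := hLRA (A ⊗[k] V) (A ⊗[k] W) (Aux17.bc cV) (Aux17.bc cW)
      (φ.baseChange A) (Aux17.bc_hom cV cW φ hφhom) hsurjbc ybar hyinv
    have hx0 : LinearMap.lTensor A DV x = 0 := (Aux17.mem_bc_invariants_iff cV x).1 hxinv
    obtain ⟨x', hx'⟩ := (hexactV x).1 hx0
    refine ⟨x', hinj ?_⟩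
    rw [← LinearMap.comp_apply, ← LinearMap.lTensor_comp]
    have hc : (LinearMap.ker DW).subtype.comp φG = φ.comp (LinearMap.ker DV).subtype := rfl
    rw [hc, LinearMap.lTensor_comp, LinearMap.comp_apply, hx']
    have hbc : LinearMap.lTensor A φ x = (φ.baseChange A) x := by
      rw [LinearMap.baseChange_eq_ltensor]
    rw [hbc, hx]
  -- faithfully flat descent of surjectivity
  have hq : ((LinearMap.range φG).mkQ) = 0 := by
    rw [Module.FaithfullyFlat.zero_iff_lTensor_zero k A]
    apply LinearMap.ext
    intro z
    obtain ⟨x', rfl⟩ := hsurj z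
    rw [← LinearMap.comp_apply, ← LinearMap.lTensor_comp, LinearMap.range_mkQ_comp]
    simp
  have hran : ∀ wg : LinearMap.ker DW, wg ∈ LinearMap.range φG := by
    intro wg
    have h0 : (LinearMap.range φG).mkQ wg = 0 := by rw [hq]; rfl
    rw [Submodule.mkQ_apply, Submodule.Quotient.mk_eq_zero] at h0
    exact h0
  have hw' : w ∈ LinearMap.ker DW :=
    LinearMap.mem_ker.2 ((Aux17.mem_invariants_iff cW w).1 hw)
  obtain ⟨v', hv'⟩ := hran ⟨w, hw'⟩
  refine ⟨v'.1, (Aux17.mem_invariants_iff cV v'.1).2 (LinearMap.mem_ker.1 v'.2), ?_⟩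
  have h2 := congrArg Subtype.val hv'
  simpa [hφG, LinearMap.restrict_apply] using h2
end
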